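/- For a permutation \sigma \in S_n extended by appending n+1, every leaf of its minimum decomposition tree corresponds to a descent of the extended word, and every descent corresponds to a leaf; hence the number of leaves of the minimum decomposition tree equals des(\sigma) + 1. -/

import Mathlib

/-- A rooted tree with natural-number labels. -/
inductive RTree : Type
  | node : ℕ → List RTree → RTree
deriving Repr

namespace RTree

/-- Number of leaves of a rooted tree (a node with no children is a leaf). -/
def leafCount : RTree → ℕ
  | .node _ cs =>
    if cs.isEmpty then 1 else (cs.attach.map fun c => leafCount c.1).sum
decreasing_by
  have := List.sizeOf_lt_of_mem c.2
  simp only [RTree.node.sizeOf_spec]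
  omega

/-- The list of labels of the leaves of a rooted tree. -/
def leafVals : RTree → List ℕ
  | .node v cs =>
    if cs.isEmpty then [v] else (cs.attach.map fun c => leafVals c.1).flatten
decreasing_by
  have := List.sizeOf_lt_of_mem c.2
  simp only [RTree.node.sizeOf_spec]
  omega

/-- The sum, over all internal (non-leaf) nodes `v`, of the number of leaves in the
subtree of `v`. -/
def incidenceSum : RTree → ℕ
  | .node v cs =>
    if cs.isEmpty then 0
    else leafCount (.node v cs) + (cs.attach.map fun c => incidenceSum c.1).sum
decreasing_by
  have := List.sizeOf_lt_of_mem c.2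
  simp only [RTree.node.sizeOf_spec]
  omega

end RTree

/-- Split a word into blocks by repeatedly cutting just after the (first occurrence of
the) global maximum of the remaining word, as in the maximum-weight tree construction. -/
def maxSplit : ℕ → List ℕ → List (List ℕ)
  | 0, _ => []
  | _, [] => []
  | fuel + 1, l =>
    let i := l.idxOf (l.foldr max 0)
    l.take (i + 1) :: maxSplit fuel (l.drop (i + 1))

/-- Build the minimum decomposition tree of a word: the root is the minimum `m`; the
word splits as `π₁ ⋯ π_L · m · π_R`, where the `πᵢ` are the blocks of the left part
cut at successive global maxima; the children of `m` are the trees of the `πᵢ` and of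
`π_R`. -/
def minDecomp : ℕ → List ℕ → RTree
  | 0, _ => .node 0 []
  | fuel + 1, l =>
    let m := l.foldr min (l.headD 0)
    let i := l.idxOf m
    let left := l.take i
    let right := l.drop (i + 1)
    .node m
      (((maxSplit left.length left).map (minDecomp fuel))
        ++ (if right.isEmpty then [] else [minDecomp fuel right]))

/-- The word of a permutation `σ ∈ Sₙ` (values in `{1,…,n}`) with `n+1` appended. -/
def permWord {n : ℕ} (σ : Equiv.Perm (Fin n)) : List ℕ :=
  (List.ofFn fun i => (σ i : ℕ) + 1) ++ [n + 1]

/-- The minimum decomposition tree of a permutation. -/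
def permTree {n : ℕ} (σ : Equiv.Perm (Fin n)) : RTree :=
  minDecomp (permWord σ).length (permWord σ)

/-- The weight of a permutation `σ ∈ Sₙ` (Corollary 3.3): the sum over the non-descent
nodes of the number of descents (leaves) in their subtree of its maximum-weight maxmin
tree, minus `n`. -/
def permWeight {n : ℕ} (σ : Equiv.Perm (Fin n)) : ℕ :=
  RTree.incidenceSum (permTree σ) - n

/-- The number of descents of a permutation. -/
def numDescents {n : ℕ} (σ : Equiv.Perm (Fin n)) : ℕ :=
  (Finset.univ.filter fun i : Fin n =>
    ∃ h : (i : ℕ) + 1 < n, σ ⟨(i : ℕ) + 1, h⟩ < σ i).card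

def dP (l : List ℕ) (i : ℕ) : Prop := i + 1 = l.length ∨ l.getD (i + 1) 0 < l.getD i 0

instance dP.dec (l : List ℕ) : DecidablePred (dP l) := fun _ => by unfold dP; infer_instance

def descList (l : List ℕ) : List ℕ :=
  ((List.range l.length).filter fun i => decide (dP l i)).map (l.getD · 0)

lemma descList_nil : descList [] = [] := rfl

lemma descList_singleton (x : ℕ) : descList [x] = [x] := by
  simp [descList, dP, List.range_succ]

lemma getLastD_congr {l : List ℕ} (h : l ≠ []) (d₁ d₂ : ℕ) :
    l.getLastD d₁ = l.getLastD d₂ := by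
  cases l with
  | nil => exact absurd rfl h
  | cons a t => rw [List.getLastD_cons, List.getLastD_cons]

lemma getLastD_eq_getD : ∀ (l : List ℕ) (d : ℕ), l.getLastD d = l.getD (l.length - 1) d := by
  intro l
  induction l with
  | nil => intro d; rfl
  | cons a t ih =>
    intro d
    rw [List.getLastD_cons, ih a]
    cases t with
    | nil => rfl
    | cons b s => simp [List.getD_cons_succ]

lemma getLastD_mem : ∀ {l : List ℕ}, l ≠ [] → ∀ d, l.getLastD d ∈ l := by
  intro l
  induction l with
  | nil => intro h; exact absurd rfl h
  | cons a t ih =>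
    intro _ d
    rw [List.getLastD_cons]
    cases t with
    | nil => simp
    | cons b s => exact List.mem_cons_of_mem a (ih (by simp) a)

lemma headD_eq_getD (l : List ℕ) (d : ℕ) : l.headD d = l.getD 0 d := by cases l <;> rfl

lemma foldr_max_spec : ∀ (l : List ℕ), l ≠ [] →
    l.foldr max 0 ∈ l ∧ ∀ x ∈ l, x ≤ l.foldr max 0 := by
  intro l
  induction l with
  | nil => intro h; exact absurd rfl h
  | cons a t ih =>
    intro _
    cases t with
    | nil => simp
    | cons b s =>
      obtain ⟨hmem, hle⟩ := ih (by simp)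
      constructor
      · rcases max_choice a ((b :: s).foldr max 0) with h | h <;>
          simp only [List.foldr_cons] at * <;> rw [h]
        · simp
        · exact List.mem_cons_of_mem a hmem
      · intro x hx
        rcases List.mem_cons.mp hx with rfl | hx
        · exact le_max_left _ _
        · exact le_trans (hle x hx) (le_max_right _ _)

lemma foldr_min_helper : ∀ (l : List ℕ) (c : ℕ),
    (l.foldr min c ∈ l ∨ l.foldr min c = c) ∧ l.foldr min c ≤ c ∧ ∀ x ∈ l, l.foldr min c ≤ x := by
  intro l
  induction l with
  | nil => intro c; simp
  | cons a t ih =>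
    intro c
    obtain ⟨hmem, hlec, hle⟩ := ih c
    simp only [List.foldr_cons]
    refine ⟨?_, ?_, ?_⟩
    · rcases min_choice a (t.foldr min c) with h | h <;> rw [h]
      · simp
      · rcases hmem with h' | h'
        · exact Or.inl (List.mem_cons_of_mem a h')
        · exact Or.inr h'
    · exact le_trans (min_le_right _ _) hlec
    · intro x hx
      rcases List.mem_cons.mp hx with rfl | hx
      · exact min_le_left _ _
      · exact le_trans (min_le_right _ _) (hle x hx)

lemma foldr_min_spec (l : List ℕ) (h : l ≠ []) :
    l.foldr min (l.headD 0) ∈ l ∧ ∀ x ∈ l, l.foldr min (l.headD 0) ≤ x := by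
  cases l with
  | nil => exact absurd rfl h
  | cons a t =>
    obtain ⟨hmem, hlec, hle⟩ := foldr_min_helper (a :: t) ((a :: t).headD 0)
    refine ⟨?_, hle⟩
    rcases hmem with h' | h'
    · exact h'
    · rw [h']; simp

lemma descList_cons (x : ℕ) (l : List ℕ) (hl : l ≠ []) :
    descList (x :: l) = (if l.getD 0 0 < x then [x] else []) ++ descList l := by
  have hlen : 1 ≤ l.length := List.length_pos_iff.mpr hl
  unfold descList
  have h1 : (x :: l).length = l.length + 1 := rfl
  rw [h1, List.range_succ_eq_map, List.filter_cons]
  have h0 : decide (dP (x :: l) 0) = decide (l.getD 0 0 < x) := by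
    apply decide_eq_decide.mpr
    unfold dP
    simp only [h1, List.getD_cons_succ, List.getD_cons_zero]
    omega
  have h2 : List.filter (fun i => decide (dP (x :: l) i)) (List.map Nat.succ (List.range l.length))
      = List.map Nat.succ (List.filter (fun i => decide (dP l i)) (List.range l.length)) := by
    rw [List.filter_map]
    congr 1
    apply List.filter_congr
    intro i _
    apply decide_eq_decide.mpr
    unfold dP
    simp only [Function.comp, Nat.succ_eq_add_one, h1, List.getD_cons_succ]
    omega
  rw [h0]
  by_cases hc : l.getD 0 0 < x
  · rw [if_pos (by simpa using hc), if_pos hc, h2]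
    simp [List.map_map, Function.comp, Nat.succ_eq_add_one, List.getD_cons_succ]
  · rw [if_neg (by simpa using hc), if_neg hc, h2]
    simp [List.map_map, Function.comp, Nat.succ_eq_add_one, List.getD_cons_succ]

lemma descList_append : ∀ (a b : List ℕ), b ≠ [] → (a ≠ [] → b.getD 0 0 < a.getLastD 0) →
    descList (a ++ b) = descList a ++ descList b := by
  intro a
  induction a with
  | nil => intro b _ _; simp [descList_nil]
  | cons x a' ih =>
    intro b hb hcond
    cases a' with
    | nil =>
      have hx : b.getD 0 0 < x := by simpa using hcond (by simp)
      rw [List.cons_append, List.nil_append, descList_cons x b hb, if_pos hx, descList_singleton]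
    | cons y s =>
      have ha' : (y :: s : List ℕ) ≠ [] := by simp
      have hab : (y :: s) ++ b ≠ [] := by simp
      rw [List.cons_append, descList_cons x _ hab, descList_cons x _ ha',
        ih b hb (fun _ => by
          have := hcond (by simp)
          rw [List.getLastD_cons, List.getLastD_cons] at this
          rwa [List.getLastD_cons])]
      have hhead : ((y :: s) ++ b).getD 0 0 = (y :: s).getD 0 0 := by
        rw [List.getD_append _ _ _ _ (by simp)]
      rw [hhead, List.append_assoc]
lemma maxSplit_nil : ∀ f : ℕ, maxSplit f [] = [] := by
  intro f; cases f <;> rfl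

lemma maxSplit_cons (f : ℕ) (a : ℕ) (t : List ℕ) :
    maxSplit (f + 1) (a :: t) =
      (a :: t).take ((a :: t).idxOf ((a :: t).foldr max 0) + 1) ::
        maxSplit f ((a :: t).drop ((a :: t).idxOf ((a :: t).foldr max 0) + 1)) := rfl

lemma maxSplit_main : ∀ (f : ℕ) (l : List ℕ), l.length ≤ f → l.Nodup →
    (∀ b ∈ maxSplit f l, b ≠ [] ∧ b.Sublist l ∧ (∀ x ∈ b, x = b.getLastD 0 ∨ x < b.getLastD 0)) ∧
    ((maxSplit f l).map descList).flatten = descList l := by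
  intro f
  induction f with
  | zero =>
    intro l hlen _
    have : l = [] := List.length_eq_zero_iff.mp (Nat.le_zero.mp hlen)
    subst this
    simp [maxSplit_nil, descList_nil]
  | succ f ih =>
    intro l hlen hnd
    cases l with
    | nil => simp [maxSplit_nil, descList_nil]
    | cons a t =>
      set l := a :: t with hl
      have hlne : l ≠ [] := by simp [hl]
      obtain ⟨hMmem, hMle⟩ := foldr_max_spec l hlne
      set M := l.foldr max 0 with hM
      set j := l.idxOf M with hj
      have hjlt : j < l.length := List.idxOf_lt_length_iff.mpr hMmem
      have hgetj : l[j] = M := List.getElem_idxOf hjlt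
      set b₁ := l.take (j + 1) with hb₁
      set rest := l.drop (j + 1) with hrest
      have hsplit : maxSplit (f + 1) l = b₁ :: maxSplit f rest := maxSplit_cons f a t
      have hb₁len : b₁.length = j + 1 := by
        rw [hb₁, List.length_take]; omega
      have hb₁ne : b₁ ≠ [] := by
        intro h; rw [h] at hb₁len; simp at hb₁len
      have hb₁last : b₁.getLastD 0 = M := by
        rw [getLastD_eq_getD, hb₁len]
        simp only [Nat.add_sub_cancel]
        rw [List.getD_eq_getElem _ _ (by rw [hb₁len]; omega)]
        simp only [hb₁, List.getElem_take]
        exact hgetj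
      have hb₁sub : b₁.Sublist l := List.take_sublist _ _
      have hb₁inv : ∀ x ∈ b₁, x = b₁.getLastD 0 ∨ x < b₁.getLastD 0 := by
        intro x hx
        rw [hb₁last]
        have : x ≤ M := hMle x (hb₁sub.mem hx)
        omega
      have hrestlen : rest.length ≤ f := by
        rw [hrest, List.length_drop]
        have : 1 ≤ l.length := List.length_pos_iff.mpr hlne
        omega
      have hrestnd : rest.Nodup := (List.drop_sublist _ _).nodup hnd
      obtain ⟨ihblocks, ihflat⟩ := ih rest hrestlen hrestnd
      constructor
      · intro b hb
        rw [hsplit, List.mem_cons] at hb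
        rcases hb with rfl | hb
        · exact ⟨hb₁ne, hb₁sub, hb₁inv⟩
        · obtain ⟨h1, h2, h3⟩ := ihblocks b hb
          exact ⟨h1, h2.trans (List.drop_sublist _ _), h3⟩
      · rw [hsplit]
        simp only [List.map_cons, List.flatten_cons, ihflat]
        by_cases hre : rest = []
        · have : l.length ≤ j + 1 := by
            rw [hrest] at hre
            have := List.length_drop (i := j + 1) (l := l)
            rw [hre] at this
            simp at this
            omega
          rw [hre, descList_nil, List.append_nil, hb₁, List.take_of_length_le this]
        · have hcond : rest.getD 0 0 < b₁.getLastD 0 := by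
            rw [hb₁last]
            have hr1 : 1 ≤ rest.length := List.length_pos_iff.mpr hre
            have hjlt1 : j + 1 < l.length := by
              rw [hrest, List.length_drop] at hr1; omega
            have hrget : rest.getD 0 0 = l[j + 1] := by
              rw [List.getD_eq_getElem _ _ (by omega)]
              simp [hrest, List.getElem_drop]
            rw [hrget]
            have hle : l[j + 1] ≤ M := hMle _ (List.getElem_mem _)
            have hne : l[j + 1] ≠ M := by
              intro h
              rw [← hgetj] at h
              have := (hnd.getElem_inj_iff).mp h
              omega
            omega
          rw [← descList_append b₁ rest hre (fun _ => hcond), hb₁, hrest,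
            List.take_append_drop]

theorem leafCount_eq_length : ∀ t : RTree, t.leafCount = t.leafVals.length
  | .node v cs => by
    rw [RTree.leafCount, RTree.leafVals]
    by_cases h : cs.isEmpty
    · simp [h]
    · rw [if_neg h, if_neg h, List.length_flatten, List.map_map]
      congr 1
      apply List.map_congr_left
      intro c _
      exact leafCount_eq_length c.1
decreasing_by
  have := List.sizeOf_lt_of_mem c.2
  simp only [RTree.node.sizeOf_spec]
  omega

lemma leafVals_node (v : ℕ) (cs : List RTree) (h : cs ≠ []) :
    RTree.leafVals (.node v cs) = (cs.map RTree.leafVals).flatten := by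
  rw [RTree.leafVals, if_neg (by simpa using h)]
  congr 1
  exact List.attach_map_val (l := cs) (f := RTree.leafVals)

lemma minDecomp_succ (f : ℕ) (l : List ℕ) :
    minDecomp (f + 1) l =
      .node (l.foldr min (l.headD 0))
        (((maxSplit (l.take (l.idxOf (l.foldr min (l.headD 0)))).length
              (l.take (l.idxOf (l.foldr min (l.headD 0))))).map (minDecomp f))
          ++ (if (l.drop (l.idxOf (l.foldr min (l.headD 0)) + 1)).isEmpty then []
              else [minDecomp f (l.drop (l.idxOf (l.foldr min (l.headD 0)) + 1))])) := rfl

lemma getD_drop' (l : List ℕ) (k j d : ℕ) : (l.drop k).getD j d = l.getD (k + j) d := by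
  rcases lt_or_ge j (l.drop k).length with h | h
  · have h2 : k + j < l.length := by rw [List.length_drop] at h; omega
    rw [List.getD_eq_getElem _ _ h, List.getD_eq_getElem _ _ h2, List.getElem_drop]
  · have h2 : l.length ≤ k + j := by rw [List.length_drop] at h; omega
    rw [List.getD_eq_default _ _ h, List.getD_eq_default _ _ h2]

lemma minDecomp_leafVals : ∀ (f : ℕ) (l : List ℕ), l.length ≤ f → l ≠ [] → l.Nodup →
    (∀ x ∈ l, x = l.getLastD 0 ∨ x < l.getLastD 0) →
    RTree.leafVals (minDecomp f l) = descList l := by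
  intro f
  induction f with
  | zero =>
    intro l hlen hne _ _
    exact absurd (List.length_eq_zero_iff.mp (Nat.le_zero.mp hlen)) hne
  | succ f ih =>
    intro l hlen hne hnd hinv
    obtain ⟨hmmem, hmle⟩ := foldr_min_spec l hne
    set m := l.foldr min (l.headD 0) with hm
    set i := l.idxOf m with hi
    have hilt : i < l.length := List.idxOf_lt_length_iff.mpr hmmem
    have hgeti : l[i] = m := List.getElem_idxOf hilt
    set left := l.take i with hleft
    set right := l.drop (i + 1) with hright
    have hleftlen : left.length = i := by rw [hleft, List.length_take]; omega
    have hdecomp : left ++ m :: right = l := by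
      rw [hleft, hright]
      rw [← hgeti, List.getElem_cons_drop, List.take_append_drop]
    have hndlr : left.Nodup ∧ (m :: right).Nodup ∧ left.Disjoint (m :: right) := by
      rw [← hdecomp] at hnd
      exact List.nodup_append'.mp hnd
    have hmnotleft : m ∉ left := fun h => hndlr.2.2 h List.mem_cons_self
    have hmnotright : m ∉ right := by
      have := hndlr.2.1
      simp only [List.nodup_cons] at this
      exact this.1
    have hmem_left : ∀ x ∈ left, x ∈ l := fun x hx => (List.take_sublist _ _).mem hx
    have hmem_right : ∀ x ∈ right, x ∈ l := fun x hx => (List.drop_sublist _ _).mem hx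
    have hgetDi : l.getD i 0 = m := by
      rw [List.getD_eq_getElem _ _ hilt]; exact hgeti
    by_cases hone : l.length = 1
    · have hi0 : i = 0 := by omega
      have hlefte : left = [] := by rw [hleft, hi0, List.take_zero]
      have hrighte : right = [] := by
        rw [hright]; exact List.drop_eq_nil_of_le (by omega)
      have hleq : l = [m] := by rw [← hdecomp, hlefte, hrighte]; rfl
      rw [minDecomp_succ, ← hm, ← hi, ← hleft, ← hright, hlefte, hrighte]
      simp only [List.length_nil, maxSplit_nil, List.map_nil, List.isEmpty_nil,
        if_true, List.nil_append]
      conv_rhs => rw [hleq]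
      rw [RTree.leafVals, descList_singleton]
      simp
    · -- l.length ≥ 2
      have hlen2 : 2 ≤ l.length := by
        have : 1 ≤ l.length := List.length_pos_iff.mpr hne
        omega
      have hlastmem : l.getLastD 0 ∈ l := getLastD_mem hne 0
      have hrightne : right ≠ [] := by
        intro hre
        -- then i = l.length - 1, so m is the last element
        have hip : i + 1 ≥ l.length := by
          have := List.length_drop (i := i + 1) (l := l)
          rw [← hright, hre] at this
          simp at this
          omega
        have hieq : i = l.length - 1 := by omega
        have hmlast : m = l.getLastD 0 := by
          rw [getLastD_eq_getD, ← hieq, hgetDi]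
        -- left = take (l.length - 1) is nonempty
        have hleftne : left ≠ [] := by
          intro h
          have h0 : left.length = 0 := by rw [h]; rfl
          omega
        obtain ⟨x, hx⟩ := List.exists_mem_of_ne_nil left hleftne
        have hxl : x ∈ l := hmem_left x hx
        have hxm : m ≤ x := hmle x hxl
        have hxne : x ≠ m := fun h => hmnotleft (h ▸ hx)
        rcases hinv x hxl with h | h
        · exact hxne (h.trans hmlast.symm)
        · rw [← hmlast] at h; omega
      have hrightlen : right.length ≤ f := by
        rw [hright, List.length_drop]; omega
      have hleftlenf : left.length ≤ f := by omega
      -- invariant for right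
      have hrlast : right.getLastD 0 = l.getLastD 0 := by
        have hr1 : 1 ≤ right.length := List.length_pos_iff.mpr hrightne
        have hrlen : right.length = l.length - (i + 1) := by
          rw [hright, List.length_drop]
        rw [hrlen] at hr1
        rw [getLastD_eq_getD, getLastD_eq_getD, hrlen]
        conv_lhs => rw [hright]
        rw [getD_drop']
        congr 1
        omega
      have hrightinv : ∀ x ∈ right, x = right.getLastD 0 ∨ x < right.getLastD 0 := by
        intro x hx
        rw [hrlast]
        exact hinv x (hmem_right x hx)
      have hrightnd : right.Nodup := (List.drop_sublist _ _).nodup hnd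
      have hleftnd : left.Nodup := hndlr.1
      -- compute the tree
      rw [minDecomp_succ, ← hm, ← hi, ← hleft, ← hright,
        if_neg (by simpa using hrightne)]
      rw [leafVals_node _ _ (by simp)]
      rw [List.map_append, List.map_map, List.flatten_append]
      simp only [List.map_cons, List.map_nil, List.flatten_cons, List.flatten_nil,
        List.append_nil]
      -- blocks
      obtain ⟨hblocks, hflat⟩ := maxSplit_main left.length left le_rfl hleftnd
      have hmapeq : left.map id = left.map id := rfl
      have hb : List.map (RTree.leafVals ∘ minDecomp f) (maxSplit left.length left)
          = List.map descList (maxSplit left.length left) := by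
        apply List.map_congr_left
        intro b hbmem
        obtain ⟨hbne, hbsub, hbinv⟩ := hblocks b hbmem
        have hbnd : b.Nodup := hbsub.nodup hleftnd
        have hblen : b.length ≤ f := le_trans (le_trans hbsub.length_le (le_of_eq hleftlen)) (by omega)
        exact ih b hblen hbne hbnd hbinv
      rw [hb, hflat, ih right hrightlen hrightne hrightnd hrightinv]
      -- now RHS: descList l
      rw [← hdecomp]
      have hmlt : ∀ x ∈ left, m < x := by
        intro x hx
        have h1 := hmle x (hmem_left x hx)
        have h2 : x ≠ m := fun h => hmnotleft (h ▸ hx)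
        omega
      rw [descList_append left (m :: right) (by simp) (fun hlne' => by
        simp only [List.getD_cons_zero]
        exact hmlt _ (getLastD_mem hlne' 0))]
      rw [descList_cons m right hrightne]
      have hnotlt : ¬ right.getD 0 0 < m := by
        have hr1 : 1 ≤ right.length := List.length_pos_iff.mpr hrightne
        have : right.getD 0 0 ∈ right := by
          rw [List.getD_eq_getElem _ _ (by omega)]
          exact List.getElem_mem _
        have := hmle _ (hmem_right _ this)
        omega
      rw [if_neg hnotlt, List.nil_append]

lemma list_toFinset_map (l : List ℕ) (f : ℕ → ℕ) : (l.map f).toFinset = l.toFinset.image f := by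
  ext x; simp

lemma list_toFinset_range (k : ℕ) : (List.range k).toFinset = Finset.range k := by
  ext x; simp


/-- Leaves of the minimum decomposition tree are exactly the descents (Lemma 3.8): for
`σ ∈ Sₙ` extended by appending `n+1`, the set of leaf labels of the minimum
decomposition tree equals the set of values at descent positions of the extended word
(where the final `n+1` counts as one extra descent); hence the number of leaves equals
`des(σ) + 1`. -/
theorem leaves_eq_descents {n : ℕ} (σ : Equiv.Perm (Fin n)) :
    (RTree.leafVals (permTree σ)).toFinset
        = ((Finset.range (permWord σ).length).filter fun i =>
            i + 1 = (permWord σ).length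
              ∨ (permWord σ).getD (i + 1) 0 < (permWord σ).getD i 0).image
            (fun i => (permWord σ).getD i 0) ∧
    RTree.leafCount (permTree σ) = numDescents σ + 1 := by
  set w := permWord σ with hw
  have hwlen : w.length = n + 1 := by simp [hw, permWord]
  have hget : ∀ i (h : i < n), w.getD i 0 = (σ ⟨i, h⟩ : ℕ) + 1 := by
    intro i h
    rw [hw, permWord, List.getD_append _ _ _ _ (by simp [h]),
      List.getD_eq_getElem _ _ (by simp [h]), List.getElem_ofFn]
  have hgetn : w.getD n 0 = n + 1 := by
    rw [hw, permWord, List.getD_append_right _ _ _ _ (by simp)]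
    simp
  have hne : w ≠ [] := by
    intro h; rw [h] at hwlen; simp at hwlen
  have hnodup : w.Nodup := by
    rw [hw, permWord, List.nodup_append']
    refine ⟨?_, by simp, ?_⟩
    · rw [List.nodup_ofFn]
      intro a b hab
      exact σ.injective (by
        have : ((σ a : ℕ) + 1) = (σ b : ℕ) + 1 := hab
        exact Fin.val_injective (by omega))
    · intro x hx hx'
      rw [List.mem_ofFn] at hx
      obtain ⟨a, ha⟩ := hx
      have ha' : (σ a : ℕ) + 1 = x := ha
      simp at hx'
      have : (σ a : ℕ) < n := (σ a).isLt
      omega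
  have hlast : w.getLastD 0 = n + 1 := by
    rw [getLastD_eq_getD, hwlen]
    simpa using hgetn
  have hinv : ∀ x ∈ w, x = w.getLastD 0 ∨ x < w.getLastD 0 := by
    intro x hx
    rw [hlast]
    rw [hw, permWord, List.mem_append] at hx
    rcases hx with hx | hx
    · rw [List.mem_ofFn] at hx
      obtain ⟨a, ha⟩ := hx
      have ha' : (σ a : ℕ) + 1 = x := ha
      have : (σ a : ℕ) < n := (σ a).isLt
      omega
    · simp at hx
      omega
  have h1 : RTree.leafVals (permTree σ) = descList w :=
    minDecomp_leafVals w.length w le_rfl hne hnodup hinv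
  have hfilter : (Finset.range w.length).filter (fun x => decide (dP w x) = true)
      = (Finset.range w.length).filter
          (fun i => i + 1 = w.length ∨ w.getD (i + 1) 0 < w.getD i 0) := by
    ext x
    simp [dP]
  constructor
  · rw [h1]
    unfold descList
    rw [list_toFinset_map, List.toFinset_filter, list_toFinset_range, hfilter]
  · rw [leafCount_eq_length, h1]
    unfold descList
    rw [List.length_map, hwlen, List.range_succ, List.filter_append]
    have hn : List.filter (fun i => decide (dP w i)) [n] = [n] := by
      simp [dP, hwlen]
    rw [hn, List.length_append, List.length_cons, List.length_nil]
    congr 1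
    have hndf : (List.filter (fun i => decide (dP w i)) (List.range n)).Nodup :=
      List.Nodup.filter _ List.nodup_range
    rw [← List.toFinset_card_of_nodup hndf, List.toFinset_filter, list_toFinset_range]
    have himg : (Finset.range n).filter (fun x => decide (dP w x) = true)
        = (Finset.univ.filter fun i : Fin n =>
            ∃ h : (i : ℕ) + 1 < n, σ ⟨(i : ℕ) + 1, h⟩ < σ i).image Fin.val := by
      ext x
      simp only [Finset.mem_filter, Finset.mem_range, Finset.mem_image, Finset.mem_univ,
        true_and, decide_eq_true_eq]
      constructor
      · rintro ⟨hx, hdp⟩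
        rcases hdp with heq | hlt
        · rw [hwlen] at heq; omega
        · by_cases hx1 : x + 1 < n
          · refine ⟨⟨x, hx⟩, ⟨hx1, ?_⟩, rfl⟩
            rw [hget x hx, hget (x + 1) hx1] at hlt
            rw [Fin.lt_def]
            show (σ ⟨x + 1, hx1⟩ : ℕ) < (σ ⟨x, hx⟩ : ℕ)
            omega
          · have hx1n : x + 1 = n := by omega
            rw [hget x hx] at hlt
            rw [hx1n, hgetn] at hlt
            have : (σ ⟨x, hx⟩ : ℕ) < n := (σ ⟨x, hx⟩).isLt
            omega
      · rintro ⟨a, ⟨ha1, halt⟩, rfl⟩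
        refine ⟨a.isLt, Or.inr ?_⟩
        rw [hget (a : ℕ) a.isLt, hget ((a : ℕ) + 1) ha1]
        have h2 : σ ⟨(a : ℕ), a.isLt⟩ = σ a := by congr 1
        rw [h2]
        exact Nat.add_lt_add_right (Fin.lt_def.mp halt) 1
    rw [himg, Finset.card_image_of_injective _ Fin.val_injective, numDescents]
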